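/- Let A be an n×n matrix over ℝ≥0∞ and let A* := ∑' k, A^k be its closure. Then A* satisfies both matrix equations A* = A·A* + I and A* = A*·A + I, where I is the n×n identity matrix. -/

import Mathlib

open scoped ENNReal

private lemma mat_tsum_apply {n : ℕ} (f : ℕ → Matrix (Fin n) (Fin n) ℝ≥0∞) (i j : Fin n) :
    (∑' k, f k) i j = ∑' k, f k i j := by
  erw [tsum_apply, tsum_apply]
  · exact Pi.summable.2 fun _ => ENNReal.summable
  · exact Pi.summable.2 fun _ => Pi.summable.2 fun _ => ENNReal.summable

private lemma mat_mul_tsum {n : ℕ} (A : Matrix (Fin n) (Fin n) ℝ≥0∞)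
    (f : ℕ → Matrix (Fin n) (Fin n) ℝ≥0∞) :
    A * (∑' k, f k) = ∑' k, A * f k := by
  ext i j
  rw [mat_tsum_apply]
  simp only [Matrix.mul_apply, mat_tsum_apply]
  simp_rw [← ENNReal.tsum_mul_left]
  exact (Summable.tsum_finsetSum fun l _ => ENNReal.summable).symm

private lemma mat_tsum_mul {n : ℕ} (A : Matrix (Fin n) (Fin n) ℝ≥0∞)
    (f : ℕ → Matrix (Fin n) (Fin n) ℝ≥0∞) :
    (∑' k, f k) * A = ∑' k, f k * A := by
  ext i j
  rw [mat_tsum_apply]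
  simp only [Matrix.mul_apply, mat_tsum_apply]
  simp_rw [← ENNReal.tsum_mul_right]
  exact (Summable.tsum_finsetSum fun l _ => ENNReal.summable).symm

private lemma mat_tsum_shift {n : ℕ} (f : ℕ → Matrix (Fin n) (Fin n) ℝ≥0∞) :
    (∑' k, f k) = (∑' k, f (k + 1)) + f 0 := by
  ext i j
  rw [mat_tsum_apply, tsum_eq_zero_add' ENNReal.summable]
  rw [Matrix.add_apply, mat_tsum_apply, add_comm]

theorem matrix_closure_fixed_point (n : ℕ) (A : Matrix (Fin n) (Fin n) ℝ≥0∞) :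
    (∑' k : ℕ, A ^ k) = A * (∑' k : ℕ, A ^ k) + 1 ∧
    (∑' k : ℕ, A ^ k) = (∑' k : ℕ, A ^ k) * A + 1 := by
  constructor
  · rw [mat_mul_tsum]
    simpa [pow_succ'] using mat_tsum_shift (fun k => A ^ k)
  · rw [mat_tsum_mul]
    simpa [pow_succ] using mat_tsum_shift (fun k => A ^ k)
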